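/- Let Σ be a finite alphabet and X ⊆ Σ^ℤ a minimal subshift. Then for every word u ∈ L(X) there exists a word v ∈ L(X) such that every occurrence of v in a point of X is immediately followed by u; that is, for every x ∈ X and index i, if x|_{[i; i+ℓ(v)−1]} = v then x|_{[i+ℓ(v); i+ℓ(v)+ℓ(u)−1]} = u. -/

import Mathlib

def shiftMap {A : Type*} (x : ℤ → A) : ℤ → A := fun i => x (i + 1)

def AppearsAt {A : Type*} (w : List A) (x : ℤ → A) (i : ℤ) : Prop :=
  ∀ (j : ℕ) (hj : j < w.length), x (i + j) = w.get ⟨j, hj⟩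

def InLang {A : Type*} (X : Set (ℤ → A)) (w : List A) : Prop :=
  ∃ x ∈ X, ∃ i : ℤ, AppearsAt w x i

namespace ForcingAux

variable {A : Type*}

def shiftBy (k : ℤ) (x : ℤ → A) : ℤ → A := fun i => x (i + k)

lemma shiftBy_zero (x : ℤ → A) : shiftBy 0 x = x := by
  funext i; simp [shiftBy]

lemma shiftMap_shiftBy (k : ℤ) (x : ℤ → A) : shiftMap (shiftBy k x) = shiftBy (k + 1) x := by
  funext i
  show x (i + 1 + k) = x (i + (k + 1))
  exact congrArg x (by ring)

lemma appearsAt_shiftBy (w : List A) (x : ℤ → A) (k i : ℤ) :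
    AppearsAt w (shiftBy k x) i ↔ AppearsAt w x (i + k) := by
  constructor
  · intro h j hj
    have h' := h j hj
    show x (i + k + (j : ℤ)) = _
    rw [show (i + k + (j : ℤ)) = (i + (j:ℤ) + k) by ring]
    exact h'
  · intro h j hj
    have h' := h j hj
    show x (i + (j:ℤ) + k) = _
    rw [show (i + (j:ℤ) + k) = (i + k + (j : ℤ)) by ring]
    exact h'

lemma mem_shiftMap (X : Set (ℤ → A)) (hinv : shiftMap '' X = X) {x : ℤ → A} (hx : x ∈ X) :
    shiftMap x ∈ X := by
  rw [← hinv]; exact ⟨x, hx, rfl⟩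

lemma mem_unshift (X : Set (ℤ → A)) (hinv : shiftMap '' X = X) {x : ℤ → A} (hx : x ∈ X) :
    shiftBy (-1) x ∈ X := by
  have hx' : x ∈ shiftMap '' X := by rw [hinv]; exact hx
  obtain ⟨z, hz, hzx⟩ := hx'
  have : shiftBy (-1) x = z := by
    funext i
    rw [← hzx]
    show shiftMap z (i + (-1)) = z i
    show z (i + (-1) + 1) = z i
    exact congrArg z (by ring)
  rw [this]; exact hz

lemma mem_shiftBy (X : Set (ℤ → A)) (hinv : shiftMap '' X = X) (k : ℤ) {x : ℤ → A} (hx : x ∈ X) :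
    shiftBy k x ∈ X := by
  induction k using Int.induction_on with
  | zero => rw [shiftBy_zero]; exact hx
  | succ n ih =>
      have := mem_shiftMap X hinv ih
      rwa [shiftMap_shiftBy] at this
  | pred n ih =>
      have := mem_unshift X hinv ih
      have he : shiftBy (-1) (shiftBy (-(n:ℤ)) x) = shiftBy (-(n:ℤ) - 1) x := by
        funext i
        show x (i + -1 + -(n:ℤ)) = x (i + (-(n:ℤ) - 1))
        exact congrArg x (by ring)
      rwa [he] at this

def wordOf (x : ℤ → A) (i : ℤ) (n : ℕ) : List A := List.ofFn fun j : Fin n => x (i + j)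

@[simp] lemma length_wordOf (x : ℤ → A) (i : ℤ) (n : ℕ) : (wordOf x i n).length = n :=
  List.length_ofFn

lemma get_wordOf (x : ℤ → A) (i : ℤ) (n : ℕ) (j : ℕ) (hj : j < (wordOf x i n).length) :
    (wordOf x i n).get ⟨j, hj⟩ = x (i + j) := by
  simp [wordOf, List.get_eq_getElem, List.getElem_ofFn]

lemma appearsAt_wordOf (x : ℤ → A) (i : ℤ) (n : ℕ) : AppearsAt (wordOf x i n) x i := by
  intro j hj
  rw [get_wordOf]

lemma inLang_wordOf (X : Set (ℤ → A)) {x : ℤ → A} (hx : x ∈ X) (i : ℤ) (n : ℕ) :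
    InLang X (wordOf x i n) := ⟨x, hx, i, appearsAt_wordOf x i n⟩

/-- `w` occurs inside the list `q` at position `r`. -/
def SubAt (w q : List A) (r : ℕ) : Prop :=
  r + w.length ≤ q.length ∧
    ∀ (c : ℕ) (hc : c < w.length) (h : r + c < q.length),
      q.get ⟨r + c, h⟩ = w.get ⟨c, hc⟩

lemma appearsAt_of_subAt {w q : List A} {x : ℤ → A} {i : ℤ} {r : ℕ}
    (hq : AppearsAt q x i) (hs : SubAt w q r) : AppearsAt w x (i + r) := by
  intro c hc
  have hL := hs.1
  have h2 : r + c < q.length := by omega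
  have e1 := hq (r + c) h2
  have e2 := hs.2 c hc h2
  rw [show (i + (r:ℤ) + (c:ℤ)) = i + ((r + c : ℕ) : ℤ) by push_cast; ring]
  rw [e1, e2]

lemma subAt_of_appears {w q : List A} {x : ℤ → A} {i t : ℤ}
    (hq : AppearsAt q x i) (hw : AppearsAt w x t) (h1 : i ≤ t)
    (h2 : t + w.length ≤ i + q.length) : SubAt w q (t - i).toNat := by
  have hr : ((t - i).toNat : ℤ) = t - i := Int.toNat_of_nonneg (by omega)
  constructor
  · omega
  · intro c hc h
    have e1 := hq ((t - i).toNat + c) h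
    have e2 := hw c hc
    rw [← e1, ← e2]
    exact congrArg x (by push_cast [hr]; ring)



def shiftEquiv' : (ℤ → A) ≃ (ℤ → A) where
  toFun := shiftMap
  invFun := fun x i => x (i - 1)
  left_inv := fun x => funext fun i => by
    show x (i - 1 + 1) = x i
    exact congrArg x (by ring)
  right_inv := fun x => funext fun i => by
    show x (i + 1 - 1) = x i
    exact congrArg x (by ring)

variable [TopologicalSpace A]

def shiftHomeo : (ℤ → A) ≃ₜ (ℤ → A) :=
  { shiftEquiv' with
    continuous_toFun := continuous_pi fun i => continuous_apply (i + 1)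
    continuous_invFun := continuous_pi fun i => continuous_apply (i - 1) }

@[simp] lemma coe_shiftHomeo : ⇑(shiftHomeo (A := A)) = shiftMap := rfl

variable [Fintype A] [DiscreteTopology A]

/-- In a minimal subshift, every word of the language appears in every sufficiently
long window of every point. -/
lemma exists_bound (X : Set (ℤ → A)) (hcl : IsClosed X) (hinv : shiftMap '' X = X)
    (hmin : ∀ Y : Set (ℤ → A), Y ⊆ X → Y.Nonempty → IsClosed Y →
      shiftMap '' Y = Y → Y = X)
    (w : List A) (hw : InLang X w) :
    ∃ B : ℕ, ∀ x ∈ X, ∀ i : ℤ, ∃ t : ℤ,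
      i ≤ t ∧ t + w.length ≤ i + B ∧ AppearsAt w x t := by
  by_contra hcon
  push_neg at hcon
  choose xf hxX i_ hbad using hcon
  set y : ℕ → (ℤ → A) := fun n =>
    shiftBy (i_ (2 * n + w.length) + n) (xf (2 * n + w.length)) with hy
  have hyX : ∀ n, y n ∈ X := fun n => mem_shiftBy X hinv _ (hxX _)
  have hyfree : ∀ (n : ℕ) (t : ℤ), -(n : ℤ) ≤ t → t + w.length ≤ n →
      ¬ AppearsAt w (y n) t := by
    intro n t h1 h2 happ
    rw [hy] at happ
    rw [appearsAt_shiftBy] at happ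
    refine hbad (2 * n + w.length) _ (by push_cast; omega) (by push_cast; omega) happ
  -- get a cluster point of the sequence y
  have hXc : IsCompact X := hcl.isCompact
  have hle : Filter.map y Filter.atTop ≤ Filter.principal X :=
    Filter.le_principal_iff.mpr (Filter.mem_map.mpr (Filter.univ_mem' hyX))
  obtain ⟨z, hzX, hz⟩ := hXc.exists_clusterPt hle
  have hzfree : ∀ t : ℤ, ¬ AppearsAt w z t := by
    intro t happ
    set O : Set (ℤ → A) :=
      ⋂ j : Fin w.length, (fun v : ℤ → A => v (t + (j : ℕ))) ⁻¹' {w.get j} with hO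
    have hOopen : IsOpen O := isOpen_iInter_of_finite fun j =>
      (isOpen_discrete _).preimage (continuous_apply _)
    have hmemO : ∀ v : ℤ → A, v ∈ O ↔ ∀ j : Fin w.length, v (t + (j : ℕ)) = w.get j := by
      intro v
      simp [hO, Set.mem_iInter]
    have hzO : z ∈ O := (hmemO z).mpr fun j => happ j j.isLt
    have hnhds : O ∈ nhds z := hOopen.mem_nhds hzO
    have hfreq : ∃ᶠ n in Filter.atTop, y n ∈ O := by
      by_contra hev
      rw [Filter.not_frequently] at hev
      have h1 : {v : ℤ → A | v ∉ O} ∈ Filter.map y Filter.atTop :=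
        Filter.mem_map.mpr hev
      have h2 := Filter.inter_mem_inf hnhds h1
      have h3 : O ∩ {v : ℤ → A | v ∉ O} = ∅ := by
        ext v; simp
      rw [h3] at h2
      exact hz.ne (Filter.empty_mem_iff_bot.mp h2)
    obtain ⟨n, hn, hyO⟩ := Filter.frequently_atTop.mp hfreq (t.natAbs + w.length)
    have happn : AppearsAt w (y n) t := fun j hj => (hmemO (y n)).mp hyO ⟨j, hj⟩
    exact hyfree n t (by omega) (by omega) happn
  -- orbit closure of z is all of X
  set Y : Set (ℤ → A) := closure (Set.range fun k : ℤ => shiftBy k z) with hYdef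
  have hYX : Y ⊆ X := closure_minimal (by rintro v ⟨k, rfl⟩; exact mem_shiftBy X hinv k hzX) hcl
  have hYne : Y.Nonempty := ⟨z, subset_closure ⟨0, shiftBy_zero z⟩⟩
  have hrange : shiftMap '' (Set.range fun k : ℤ => shiftBy k z)
      = Set.range fun k : ℤ => shiftBy k z := by
    ext v
    constructor
    · rintro ⟨-, ⟨k, rfl⟩, rfl⟩
      exact ⟨k + 1, (shiftMap_shiftBy k z).symm⟩
    · rintro ⟨k, rfl⟩
      refine ⟨shiftBy (k - 1) z, ⟨k - 1, rfl⟩, ?_⟩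
      rw [shiftMap_shiftBy]
      congr 1
      ring
  have hYinv : shiftMap '' Y = Y := by
    have him := Homeomorph.image_closure (shiftHomeo (A := A))
      (Set.range fun k : ℤ => shiftBy k z)
    rw [coe_shiftHomeo] at him
    rw [hYdef, him, hrange]
  have hYeq := hmin Y hYX hYne isClosed_closure hYinv
  obtain ⟨xs, hxs, ts, happs⟩ := hw
  have hxsY : xs ∈ Y := by rw [hYeq]; exact hxs
  rw [hYdef, mem_closure_iff] at hxsY
  set O : Set (ℤ → A) :=
    ⋂ j : Fin w.length, (fun v : ℤ → A => v (ts + (j : ℕ))) ⁻¹' {w.get j} with hO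
  have hOopen : IsOpen O := isOpen_iInter_of_finite fun j =>
    (isOpen_discrete _).preimage (continuous_apply _)
  have hmemO : ∀ v : ℤ → A, v ∈ O ↔ ∀ j : Fin w.length, v (ts + (j : ℕ)) = w.get j := by
    intro v
    simp [hO, Set.mem_iInter]
  have hxsO : xs ∈ O := (hmemO xs).mpr fun j => happs j j.isLt
  obtain ⟨v, hvO, ⟨k, rfl⟩⟩ := hxsY O hOopen hxsO
  have happk : AppearsAt w (shiftBy k z) ts := fun j hj => (hmemO _).mp hvO ⟨j, hj⟩
  rw [appearsAt_shiftBy] at happk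
  exact hzfree _ happk



/-- The key step: if every occurrence of a nonempty word `w` forces `u` at offset `d`,
then there is a word `w'` forcing `u` at an offset sticking out one letter further
past its end. -/
lemma step_lemma (X : Set (ℤ → A)) (hne : X.Nonempty) (hcl : IsClosed X)
    (hinv : shiftMap '' X = X)
    (hmin : ∀ Y : Set (ℤ → A), Y ⊆ X → Y.Nonempty → IsClosed Y →
      shiftMap '' Y = Y → Y = X)
    (u w : List A) (d : ℕ) (hwL : InLang X w)
    (hwF : ∀ y ∈ X, ∀ p : ℤ, AppearsAt w y p → AppearsAt u y (p + d))
    (hwne : w ≠ []) :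
    ∃ (w' : List A) (d' : ℕ), InLang X w' ∧
      (∀ y ∈ X, ∀ p : ℤ, AppearsAt w' y p → AppearsAt u y (p + d')) ∧
      d' + w.length = w'.length + d + 1 := by
  obtain ⟨B, hB⟩ := exists_bound X hcl hinv hmin w hwL
  have hwpos : 0 < w.length := List.length_pos_iff.mpr hwne
  -- words of the language not containing w
  set FreeQ : List A → Prop := fun q => InLang X q ∧ ∀ r : ℕ, ¬ SubAt w q r with hFreeQ
  have hfree_bound : ∀ q, FreeQ q → q.length ≤ B := by
    intro q hq
    obtain ⟨⟨x, hx, i, happ⟩, hfree⟩ := hq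
    by_contra hlen
    push_neg at hlen
    obtain ⟨t, ht1, ht2, htapp⟩ := hB x hx i
    exact hfree _ (subAt_of_appears happ htapp ht1 (by omega))
  have hSne : FreeQ [] := by
    obtain ⟨x0, hx0⟩ := hne
    refine ⟨⟨x0, hx0, 0, fun j hj => absurd hj (by simp)⟩, fun r hr => ?_⟩
    have h1 : r + w.length ≤ ([] : List A).length := hr.1
    simp only [List.length_nil] at h1
    omega
  set S : Set ℕ := {n | ∃ q, FreeQ q ∧ q.length = n} with hS
  have hSne' : S.Nonempty := ⟨0, [], hSne, rfl⟩
  have hSbdd : BddAbove S := ⟨B, by rintro n ⟨q, hq, rfl⟩; exact hfree_bound q hq⟩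
  obtain ⟨q, hqF, hqlen⟩ : ∃ q, FreeQ q ∧ q.length = sSup S := Nat.sSup_mem hSne' hSbdd
  set L : ℕ := sSup S with hL
  have hmax : ∀ q', FreeQ q' → q'.length ≤ L := fun q' h => le_csSup hSbdd ⟨q', h, rfl⟩
  -- the word w without its last letter is free, so L+1 ≥ |w|
  have hwLe : w.length ≤ L + 1 := by
    have hdl : FreeQ w.dropLast := by
      constructor
      · obtain ⟨x, hx, i, happ⟩ := hwL
        refine ⟨x, hx, i, fun j hj => ?_⟩
        have hj' : j < w.length := by
          have := List.length_dropLast (xs := w)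
          omega
        have : w.dropLast.get ⟨j, hj⟩ = w.get ⟨j, hj'⟩ := by
          simp [List.get_eq_getElem, List.getElem_dropLast]
        rw [this]
        exact happ j hj'
      · intro r hr
        have h1 := hr.1
        rw [List.length_dropLast] at h1
        omega
    have := hmax _ hdl
    rw [List.length_dropLast] at this
    omega
  obtain ⟨k, hk⟩ : ∃ k, k + w.length = L + 1 := ⟨L + 1 - w.length, by omega⟩
  refine ⟨q, d + k, hqF.1, ?_, by omega⟩
  intro y hy p hpq
  -- the window of length L+1 starting at p contains w, necessarily at the very end
  have hnotfree : ¬ FreeQ (wordOf y p (L + 1)) := by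
    intro hF
    have := hmax _ hF
    rw [length_wordOf] at this
    omega
  have hsub : ∃ r, SubAt w (wordOf y p (L + 1)) r := by
    by_contra hns
    push_neg at hns
    exact hnotfree ⟨inLang_wordOf X hy p (L + 1), hns⟩
  obtain ⟨r, hr⟩ := hsub
  have hrlen : r + w.length ≤ L + 1 := by
    have := hr.1
    rwa [length_wordOf] at this
  by_cases hcase : r + w.length ≤ L
  · exfalso
    apply hqF.2 r
    constructor
    · omega
    · intro c hc h
      have h2' : r + c < (wordOf y p (L + 1)).length := by rw [length_wordOf]; omega
      have e1 := hpq (r + c) (by omega)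
      have e2 := hr.2 c hc h2'
      have e3 := get_wordOf y p (L + 1) (r + c) h2'
      rw [← e1, ← e3, e2]
  · have hreq : r = k := by omega
    subst hreq
    have hwapp : AppearsAt w y (p + r) :=
      appearsAt_of_subAt (appearsAt_wordOf y p (L + 1)) hr
    have hforced := hwF y hy (p + r) hwapp
    rw [show (p + ((d + r : ℕ) : ℤ)) = (p + (r : ℤ)) + (d : ℤ) by push_cast; ring]
    exact hforced

end ForcingAux

theorem minimal_subshift_forcing_word
    {A : Type*} [Fintype A] [TopologicalSpace A] [DiscreteTopology A]
    (X : Set (ℤ → A)) (hne : X.Nonempty) (hcl : IsClosed X)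
    (hinv : shiftMap '' X = X)
    (hmin : ∀ Y : Set (ℤ → A), Y ⊆ X → Y.Nonempty → IsClosed Y →
      shiftMap '' Y = Y → Y = X)
    (u : List A) (hu : InLang X u) :
    ∃ v : List A, InLang X v ∧ ∀ x ∈ X, ∀ i : ℤ,
      AppearsAt v x i → AppearsAt u x (i + v.length) := by
  classical
  have hbase : ∀ y ∈ X, ∀ p : ℤ, AppearsAt u y p → AppearsAt u y (p + (0 : ℕ)) := by
    intro y hy p hp
    simpa using hp
  have hiter : ∀ k : ℕ,
      (∃ v : List A, InLang X v ∧ ∀ x ∈ X, ∀ i : ℤ,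
        AppearsAt v x i → AppearsAt u x (i + v.length)) ∨
      ∃ (w : List A) (d : ℕ), InLang X w ∧
        (∀ y ∈ X, ∀ p : ℤ, AppearsAt w y p → AppearsAt u y (p + d)) ∧
        d + u.length = w.length + k := by
    intro k
    induction k with
    | zero => exact Or.inr ⟨u, 0, hu, hbase, by omega⟩
    | succ k ih =>
        rcases ih with done | ⟨w, d, hwL, hwF, heq⟩
        · exact Or.inl done
        by_cases hwe : w = []
        · left
          subst hwe
          obtain ⟨x0, hx0⟩ := hne
          refine ⟨[], ⟨x0, hx0, 0, fun j hj => absurd hj (by simp)⟩, ?_⟩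
          intro x hx i _
          have hall := hwF x hx (i - d) (fun j hj => absurd hj (by simp))
          have hidx : (i - (d:ℤ)) + (d:ℤ) = i + ((List.length ([] : List A) : ℕ) : ℤ) := by
            simp
          rwa [hidx] at hall
        · obtain ⟨w', d', hL', hF', heq'⟩ :=
            ForcingAux.step_lemma X hne hcl hinv hmin u w d hwL hwF hwe
          exact Or.inr ⟨w', d', hL', hF', by omega⟩
  rcases hiter u.length with done | ⟨w, d, hwL, hwF, heq⟩
  · exact done
  · have hd : d = w.length := by omega
    refine ⟨w, hwL, fun x hx i hap => ?_⟩
    have := hwF x hx i hap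
    rwa [hd] at this
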